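/- Let G be a finite abelian group (written additively) and let f : G → ℝ satisfy f(g) ≥ 0 for all g, ∑_{g∈G} f(g) = 1, and f(g) = f(−g) for all g. Let P be the G × G real matrix with P_{g,h} = f(h − g). Then the following are equivalent. (A) There exists ψ : G → ℝ with ψ(g) = ψ(−g) for all g, ψ(g) ≥ 0 for all g ≠ 0, ∑_{g∈G} ψ(g) = 0, and P = exp(Q), the matrix exponential of the G × G matrix Q with Q_{g,h} = ψ(h − g). (B) Both of the following hold: (1) for every nontrivial additive character χ : G → ℂ, ∑_{h∈G} Re(χ(h))·f(h) > 0; and (2) for every nonzero g ∈ G, ∏_{χ : Re(χ(g)) > 0} ( ∑_{h∈G} Re(χ(h))·f(h) )^{Re(χ(g))} ≥ ∏_{χ : Re(χ(g)) < 0} ( ∑_{h∈G} Re(χ(h))·f(h) )^{−Re(χ(g))}, where χ ranges over all additive characters of G and the exponents are real powers of positive reals. -/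

import Mathlib

open Matrix Finset
set_option linter.unusedSectionVars false

namespace SGBaux

variable {G : Type*} [AddCommGroup G] [Fintype G] [DecidableEq G]

lemma mulVec_char (ψ : G → ℝ) (χ : AddChar G ℂ) :
    (Matrix.of fun g h : G => (ψ (h - g) : ℂ)) *ᵥ ⇑χ = (∑ k, (ψ k : ℂ) * χ k) • ⇑χ := by
  funext g
  show ∑ h, (ψ (h - g) : ℂ) * χ h = (∑ k, (ψ k : ℂ) * χ k) * χ g
  rw [Finset.sum_mul]
  exact Fintype.sum_equiv (Equiv.subRight g) _ _ fun h => by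
    simp [Equiv.subRight, mul_assoc, ← AddChar.map_add_eq_mul, sub_add_cancel]

lemma char_sum_real (ψ : G → ℝ) (hsym : ∀ g, ψ g = ψ (-g)) (χ : AddChar G ℂ) :
    ∑ k, (ψ k : ℂ) * χ k = ((∑ k, (χ k).re * ψ k : ℝ) : ℂ) := by
  have him : ∑ k, ψ k * (χ k).im = 0 := by
    have h1 : ∑ k, ψ k * (χ k).im = ∑ k, ψ (-k) * (χ (-k)).im :=
      Fintype.sum_equiv (Equiv.neg G) _ _ (fun k => by simp)
    have h2 : ∀ k : G, ψ (-k) * (χ (-k)).im = -(ψ k * (χ k).im) := by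
      intro k
      rw [← hsym, AddChar.map_neg_eq_conj, Complex.conj_im]
      ring
    simp_rw [h2, Finset.sum_neg_distrib] at h1
    linarith
  apply Complex.ext
  · rw [Complex.ofReal_re, Complex.re_sum]
    exact Finset.sum_congr rfl fun k _ => by rw [Complex.re_ofReal_mul, mul_comm]
  · rw [Complex.ofReal_im, Complex.im_sum, ← him]
    exact Finset.sum_congr rfl fun k _ => by rw [Complex.im_ofReal_mul]

lemma exp_eigen (A : Matrix G G ℂ) (v : G → ℂ) (c : ℂ)
    (h : A *ᵥ v = c • v) : NormedSpace.exp A *ᵥ v = Complex.exp c • v := by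
  letI : SeminormedRing (Matrix G G ℂ) := Matrix.linftyOpSemiNormedRing
  letI : NormedRing (Matrix G G ℂ) := Matrix.linftyOpNormedRing
  letI : NormedAlgebra ℂ (Matrix G G ℂ) := Matrix.linftyOpNormedAlgebra
  have hpow : ∀ n : ℕ, A ^ n *ᵥ v = c ^ n • v := by
    intro n
    induction n with
    | zero => simp
    | succ n ih =>
      rw [pow_succ', ← Matrix.mulVec_mulVec, ih, Matrix.mulVec_smul, h, smul_smul, ← pow_succ]
  have hsum : Summable (fun n : ℕ => (n.factorial⁻¹ : ℂ) • A ^ n) :=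
    NormedSpace.expSeries_summable' A
  let L : Matrix G G ℂ →ₗ[ℂ] (G → ℂ) :=
    { toFun := fun M => M *ᵥ v
      map_add' := fun M N => Matrix.add_mulVec M N v
      map_smul' := fun r M => Matrix.smul_mulVec r M v }
  let Lc := LinearMap.toContinuousLinearMap L
  have key := Lc.map_tsum hsum
  have h1 : NormedSpace.exp A *ᵥ v = Lc (∑' n : ℕ, (n.factorial⁻¹ : ℂ) • A ^ n) := by
    rw [NormedSpace.exp_eq_tsum ℂ]; rfl
  rw [h1, key]
  have h2 : ∀ n : ℕ, Lc ((n.factorial⁻¹ : ℂ) • A ^ n) = ((n.factorial⁻¹ : ℂ) * c ^ n) • v := by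
    intro n
    rw [_root_.map_smul]
    show (n.factorial⁻¹ : ℂ) • (A ^ n *ᵥ v) = _
    rw [hpow, smul_smul]
  simp_rw [h2]
  rw [Summable.tsum_smul_const]
  · congr 1
    rw [Complex.exp_eq_exp_ℂ, NormedSpace.exp_eq_tsum ℂ]
    simp [smul_eq_mul]
  · simpa [smul_eq_mul] using NormedSpace.expSeries_summable' (𝕂 := ℂ) c

lemma exp_map (Q : Matrix G G ℝ) :
    (NormedSpace.exp Q).map (algebraMap ℝ ℂ)
      = NormedSpace.exp (Q.map (algebraMap ℝ ℂ)) := by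
  have hcont : Continuous ((algebraMap ℝ ℂ).mapMatrix : Matrix G G ℝ →+* Matrix G G ℂ) := by
    apply continuous_pi; intro i; apply continuous_pi; intro j
    exact Complex.continuous_ofReal.comp ((continuous_apply j).comp (continuous_apply i))
  letI : SeminormedRing (Matrix G G ℝ) := Matrix.linftyOpSemiNormedRing
  letI : NormedRing (Matrix G G ℝ) := Matrix.linftyOpNormedRing
  letI : NormedAlgebra ℝ (Matrix G G ℝ) := Matrix.linftyOpNormedAlgebra
  letI : SeminormedRing (Matrix G G ℂ) := Matrix.linftyOpSemiNormedRing
  letI : NormedRing (Matrix G G ℂ) := Matrix.linftyOpNormedRing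
  letI : NormedAlgebra ℝ (Matrix G G ℂ) := Matrix.linftyOpNormedAlgebra
  letI : NormedAlgebra ℂ (Matrix G G ℂ) := Matrix.linftyOpNormedAlgebra
  letI : NormedAlgebra ℚ (Matrix G G ℝ) := Matrix.linftyOpNormedAlgebra
  have h1 := NormedSpace.map_exp
    ((algebraMap ℝ ℂ).mapMatrix : Matrix G G ℝ →+* Matrix G G ℂ) hcont Q
  have h2 : NormedSpace.exp (Q.map (algebraMap ℝ ℂ))
      = NormedSpace.exp (Q.map (algebraMap ℝ ℂ)) :=
    rfl
  exact h1.trans h2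

lemma matrix_eq_of_char (M N : Matrix G G ℂ)
    (h : ∀ χ : AddChar G ℂ, M *ᵥ ⇑χ = N *ᵥ ⇑χ) : M = N := by
  classical
  have hcard : Fintype.card (AddChar G ℂ) = Module.finrank ℂ (G → ℂ) := by
    rw [AddChar.card_eq, Module.finrank_fintype_fun_eq_card]
  let b : Module.Basis (AddChar G ℂ) ℂ (G → ℂ) :=
    basisOfLinearIndependentOfCardEqFinrank (AddChar.linearIndependent G ℂ) hcard
  have hb : ∀ χ, b χ = ⇑χ := fun χ =>
    congrFun (coe_basisOfLinearIndependentOfCardEqFinrank _ _) χ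
  have hlin : Matrix.toLin' M = Matrix.toLin' N := by
    apply b.ext
    intro χ
    rw [hb, Matrix.toLin'_apply, Matrix.toLin'_apply]
    exact h χ
  exact Matrix.toLin'.injective hlin

lemma dual_orth (g k : G) : ∑ χ : AddChar G ℂ, (χ g).re * (χ k).re =
    ((if g + k = 0 then (Fintype.card G : ℝ) else 0)
      + (if g - k = 0 then (Fintype.card G : ℝ) else 0)) / 2 := by
  have key : ∀ χ : AddChar G ℂ, (χ g).re * (χ k).re = ((χ (g + k)).re + (χ (g - k)).re) / 2 := by
    intro χ
    have h1 : χ (g + k) = χ g * χ k := AddChar.map_add_eq_mul χ g k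
    have h2 : χ (g - k) = χ g * (starRingEnd ℂ) (χ k) := by
      rw [sub_eq_add_neg, AddChar.map_add_eq_mul, AddChar.map_neg_eq_conj]
    rw [h1, h2, Complex.mul_re, Complex.mul_re, Complex.conj_re, Complex.conj_im]
    ring
  simp_rw [key, ← Finset.sum_div, Finset.sum_add_distrib]
  rw [← Complex.re_sum, ← Complex.re_sum, AddChar.sum_apply_eq_ite, AddChar.sum_apply_eq_ite]
  split_ifs <;> simp

lemma grp_orth (χ χ' : AddChar G ℂ) : ∑ k : G, (χ k).re * (χ' k).re =
    ((if χ * χ' = 1 then (Fintype.card G : ℝ) else 0)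
      + (if χ = χ' then (Fintype.card G : ℝ) else 0)) / 2 := by
  classical
  have key : ∀ k : G, (χ k).re * (χ' k).re = (((χ * χ') k).re + ((χ / χ') k).re) / 2 := by
    intro k
    rw [AddChar.mul_apply, AddChar.div_apply, AddChar.map_neg_eq_conj χ' k]
    rw [Complex.mul_re, Complex.mul_re, Complex.conj_re, Complex.conj_im]
    ring
  simp_rw [key, ← Finset.sum_div, Finset.sum_add_distrib]
  rw [← Complex.re_sum, ← Complex.re_sum, AddChar.sum_eq_ite, AddChar.sum_eq_ite]
  have e1 : (χ * χ' = 0) ↔ (χ * χ' = 1) := Iff.rfl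
  have e2 : (χ / χ' = 0) ↔ (χ = χ') := by
    show χ / χ' = 1 ↔ _
    exact div_eq_one
  rw [if_congr e1 rfl rfl, if_congr e2 rfl rfl]
  split_ifs <;> simp

lemma prod_iff (L : AddChar G ℂ → ℝ) (hL : ∀ χ, 0 < L χ) (g : G) :
    (∏ᶠ (χ : AddChar G ℂ) (_ : (χ g).re < 0), L χ ^ (-(χ g).re) ≤
      ∏ᶠ (χ : AddChar G ℂ) (_ : 0 < (χ g).re), L χ ^ ((χ g).re))
    ↔ 0 ≤ ∑ χ : AddChar G ℂ, (χ g).re * Real.log (L χ) := by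
  classical
  set Sp : Finset (AddChar G ℂ) := univ.filter (fun χ => 0 < (χ g).re) with hSp
  set Sn : Finset (AddChar G ℂ) := univ.filter (fun χ => (χ g).re < 0) with hSn
  have hp : (∏ᶠ (χ : AddChar G ℂ) (_ : 0 < (χ g).re), L χ ^ ((χ g).re))
      = ∏ χ ∈ Sp, L χ ^ ((χ g).re) :=
    finprod_cond_eq_prod_of_cond_iff _ (fun {χ} _ => by simp [hSp])
  have hn : (∏ᶠ (χ : AddChar G ℂ) (_ : (χ g).re < 0), L χ ^ (-(χ g).re))
      = ∏ χ ∈ Sn, L χ ^ (-(χ g).re) :=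
    finprod_cond_eq_prod_of_cond_iff _ (fun {χ} _ => by simp [hSn])
  have hppos : (0:ℝ) < ∏ χ ∈ Sp, L χ ^ ((χ g).re) :=
    Finset.prod_pos fun χ _ => Real.rpow_pos_of_pos (hL χ) _
  have hnpos : (0:ℝ) < ∏ χ ∈ Sn, L χ ^ (-(χ g).re) :=
    Finset.prod_pos fun χ _ => Real.rpow_pos_of_pos (hL χ) _
  have hlogp : Real.log (∏ χ ∈ Sp, L χ ^ ((χ g).re)) = ∑ χ ∈ Sp, (χ g).re * Real.log (L χ) := by
    rw [Real.log_prod (fun χ _ => (Real.rpow_pos_of_pos (hL χ) _).ne')]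
    exact Finset.sum_congr rfl fun χ _ => Real.log_rpow (hL χ) _
  have hlogn : Real.log (∏ χ ∈ Sn, L χ ^ (-(χ g).re))
      = ∑ χ ∈ Sn, -((χ g).re * Real.log (L χ)) := by
    rw [Real.log_prod (fun χ _ => (Real.rpow_pos_of_pos (hL χ) _).ne')]
    exact Finset.sum_congr rfl fun χ _ => by rw [Real.log_rpow (hL χ)]; ring
  have hsplit : ∑ χ : AddChar G ℂ, (χ g).re * Real.log (L χ)
      = (∑ χ ∈ Sp, (χ g).re * Real.log (L χ)) + ∑ χ ∈ Sn, (χ g).re * Real.log (L χ) := by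
    rw [← Finset.sum_filter_add_sum_filter_not univ (fun χ => 0 < (χ g).re)]
    congr 1
    refine (Finset.sum_subset (fun χ hχ => ?_) (fun χ hχ hne => ?_)).symm
    · simp only [hSn, Finset.mem_filter, Finset.mem_univ, true_and] at hχ ⊢
      exact not_lt.2 hχ.le
    · simp only [hSn, Finset.mem_filter, Finset.mem_univ, true_and, not_lt] at hχ hne
      have : (χ g).re = 0 := le_antisymm hχ hne
      rw [this, zero_mul]
  rw [hp, hn, ← Real.exp_log hppos, ← Real.exp_log hnpos, Real.exp_le_exp, hlogp, hlogn,
    Finset.sum_neg_distrib]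
  constructor <;> intro h <;> linarith [hsplit]

lemma re_neg_eq (χ : AddChar G ℂ) (g : G) : (χ (-g)).re = (χ g).re := by
  rw [AddChar.map_neg_eq_conj, Complex.conj_re]

end SGBaux

/-- Theorem 4.1 of the paper: characterization of the `G`-embeddable mutation matrices of a
symmetric group-based model in terms of the additive characters of `G`. -/
theorem symmetric_group_based_embeddable_iff
    {G : Type*} [AddCommGroup G] [Fintype G] [DecidableEq G]
    (f : G → ℝ) (hf_nonneg : ∀ g, 0 ≤ f g) (hf_sum : ∑ g, f g = 1)
    (hf_symm : ∀ g, f g = f (-g)) :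
    (∃ ψ : G → ℝ, (∀ g, ψ g = ψ (-g)) ∧ (∀ g, g ≠ 0 → 0 ≤ ψ g) ∧ (∑ g, ψ g = 0) ∧
      (Matrix.of fun g h : G => f (h - g)) =
        NormedSpace.exp (Matrix.of fun g h : G => ψ (h - g)))
    ↔
    ((∀ χ : AddChar G ℂ, χ ≠ 1 → 0 < ∑ h, (χ h).re * f h) ∧
     (∀ g : G, g ≠ 0 →
       ∏ᶠ (χ : AddChar G ℂ) (_ : (χ g).re < 0),
           (∑ h, (χ h).re * f h) ^ (-(χ g).re) ≤
       ∏ᶠ (χ : AddChar G ℂ) (_ : 0 < (χ g).re),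
           (∑ h, (χ h).re * f h) ^ ((χ g).re))) := by
  classical
  set L : AddChar G ℂ → ℝ := fun χ => ∑ h, (χ h).re * f h with hLdef
  have hmapP : (Matrix.of fun g h : G => f (h - g)).map (algebraMap ℝ ℂ)
      = Matrix.of fun g h : G => (f (h - g) : ℂ) := by
    ext g h; simp [Matrix.map_apply]
  constructor
  · rintro ⟨ψ, hsym, hpos, hzero, hPQ⟩
    set s : AddChar G ℂ → ℝ := fun χ => ∑ k, (χ k).re * ψ k with hsdef
    have hmapQ : (Matrix.of fun g h : G => ψ (h - g)).map (algebraMap ℝ ℂ)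
        = Matrix.of fun g h : G => (ψ (h - g) : ℂ) := by
      ext g h; simp [Matrix.map_apply]
    have hPc : (Matrix.of fun g h : G => (f (h - g) : ℂ))
        = NormedSpace.exp (Matrix.of fun g h : G => (ψ (h - g) : ℂ)) := by
      have h0 : (Matrix.of fun g h : G => f (h - g)).map (algebraMap ℝ ℂ)
          = (NormedSpace.exp (Matrix.of fun g h : G => ψ (h - g))).map (algebraMap ℝ ℂ) :=
        congrArg (fun M : Matrix G G ℝ => M.map (algebraMap ℝ ℂ)) hPQ
      rw [SGBaux.exp_map, hmapP, hmapQ] at h0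
      exact h0
    have hLs : ∀ χ : AddChar G ℂ, L χ = Real.exp (s χ) := by
      intro χ
      have h1 : (Matrix.of fun g h : G => (f (h - g) : ℂ)) *ᵥ ⇑χ = ((L χ : ℝ) : ℂ) • ⇑χ := by
        rw [SGBaux.mulVec_char, SGBaux.char_sum_real f hf_symm]
      have h2 : NormedSpace.exp (Matrix.of fun g h : G => (ψ (h - g) : ℂ)) *ᵥ ⇑χ
          = Complex.exp ((s χ : ℝ) : ℂ) • ⇑χ := by
        apply SGBaux.exp_eigen
        rw [SGBaux.mulVec_char, SGBaux.char_sum_real ψ hsym]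
      have h3 : ((L χ : ℝ) : ℂ) • ⇑χ = Complex.exp ((s χ : ℝ) : ℂ) • ⇑χ := by
        rw [← h1, ← h2, hPc]
      have h4 := congrFun h3 0
      simp only [Pi.smul_apply, AddChar.map_zero_eq_one, smul_eq_mul, mul_one] at h4
      rw [← Complex.ofReal_exp] at h4
      exact_mod_cast h4
    have hLpos : ∀ χ : AddChar G ℂ, 0 < L χ := fun χ => (hLs χ) ▸ Real.exp_pos _
    refine ⟨fun χ _ => hLpos χ, fun g hg => ?_⟩
    rw [SGBaux.prod_iff L hLpos g]
    have hlog : ∀ χ : AddChar G ℂ, Real.log (L χ) = s χ := fun χ => by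
      rw [hLs, Real.log_exp]
    simp_rw [hlog, hsdef]
    have hswap : ∑ χ : AddChar G ℂ, (χ g).re * ∑ k, (χ k).re * ψ k
        = ∑ k, (∑ χ : AddChar G ℂ, (χ g).re * (χ k).re) * ψ k := by
      simp_rw [Finset.mul_sum]
      rw [Finset.sum_comm]
      exact Finset.sum_congr rfl fun k _ => by
        rw [Finset.sum_mul]
        exact Finset.sum_congr rfl fun χ _ => by ring
    rw [hswap]
    simp_rw [SGBaux.dual_orth]
    have hterm : ∀ k : G,
        ((if g + k = 0 then (Fintype.card G : ℝ) else 0)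
          + (if g - k = 0 then (Fintype.card G : ℝ) else 0)) / 2 * ψ k
        = (if k = -g then (Fintype.card G : ℝ) * ψ k / 2 else 0)
          + (if k = g then (Fintype.card G : ℝ) * ψ k / 2 else 0) := by
      intro k
      have e1 : g + k = 0 ↔ k = -g := by rw [add_eq_zero_iff_neg_eq, eq_comm]
      have e2 : g - k = 0 ↔ k = g := by rw [sub_eq_zero, eq_comm]
      rw [if_congr e1 rfl rfl, if_congr e2 rfl rfl]
      split_ifs <;> ring
    simp_rw [hterm]
    rw [Finset.sum_add_distrib, Finset.sum_ite_eq' univ (-g), Finset.sum_ite_eq' univ g]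
    simp only [Finset.mem_univ, if_true]
    have hψneg : ψ (-g) = ψ g := (hsym g).symm
    have hcard : (0:ℝ) ≤ (Fintype.card G : ℝ) := Nat.cast_nonneg _
    have := hpos g hg
    rw [hψneg]
    nlinarith
  · rintro ⟨h1, h2⟩
    have hLone : L 1 = 1 := by
      simp [hLdef, AddChar.one_apply, hf_sum]
    have hLpos : ∀ χ : AddChar G ℂ, 0 < L χ := by
      intro χ
      by_cases hχ : χ = 1
      · rw [hχ, hLone]; norm_num
      · exact h1 χ hχ
    have hcard0 : (0:ℝ) < (Fintype.card G : ℝ) := by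
      exact_mod_cast Fintype.card_pos
    set ψ : G → ℝ := fun g => (Fintype.card G : ℝ)⁻¹ * ∑ χ : AddChar G ℂ,
      (χ g).re * Real.log (L χ) with hψdef
    have hsym : ∀ g, ψ g = ψ (-g) := by
      intro g
      simp only [hψdef]
      congr 1
      exact Finset.sum_congr rfl fun χ _ => by rw [SGBaux.re_neg_eq]
    have hLinv : ∀ χ : AddChar G ℂ, L χ⁻¹ = L χ := by
      intro χ
      simp only [hLdef]
      exact Finset.sum_congr rfl fun h _ => by
        rw [AddChar.inv_apply, SGBaux.re_neg_eq]
    -- the key Fourier inversion computation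
    have hkey : ∀ χ : AddChar G ℂ, ∑ k, (χ k).re * ψ k = Real.log (L χ) := by
      intro χ
      simp only [hψdef]
      have hswap : ∑ k, (χ k).re * ((Fintype.card G : ℝ)⁻¹ * ∑ χ' : AddChar G ℂ,
            (χ' k).re * Real.log (L χ'))
          = (Fintype.card G : ℝ)⁻¹ * ∑ χ' : AddChar G ℂ,
            (∑ k, (χ k).re * (χ' k).re) * Real.log (L χ') := by
        rw [Finset.mul_sum]
        simp_rw [Finset.mul_sum]
        rw [Finset.sum_comm]
        exact Finset.sum_congr rfl fun χ' _ => by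
          rw [Finset.sum_mul, Finset.mul_sum]
          exact Finset.sum_congr rfl fun k _ => by ring
      rw [hswap]
      simp_rw [SGBaux.grp_orth]
      have hterm : ∀ χ' : AddChar G ℂ,
          ((if χ * χ' = 1 then (Fintype.card G : ℝ) else 0)
            + (if χ = χ' then (Fintype.card G : ℝ) else 0)) / 2 * Real.log (L χ')
          = (if χ' = χ⁻¹ then (Fintype.card G : ℝ) * Real.log (L χ') / 2 else 0)
            + (if χ' = χ then (Fintype.card G : ℝ) * Real.log (L χ') / 2 else 0) := by
        intro χ'
        have e1 : χ * χ' = 1 ↔ χ' = χ⁻¹ := by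
          rw [mul_eq_one_iff_inv_eq, eq_comm]
        have e2 : (χ = χ') ↔ (χ' = χ) := eq_comm
        rw [if_congr e1 rfl rfl, if_congr e2 rfl rfl]
        split_ifs <;> ring
      simp_rw [hterm]
      rw [Finset.sum_add_distrib, Finset.sum_ite_eq' univ χ⁻¹, Finset.sum_ite_eq' univ χ]
      simp only [Finset.mem_univ, if_true]
      rw [hLinv]
      field_simp
      ring
    refine ⟨ψ, hsym, ?_, ?_, ?_⟩
    · intro g hg
      have hs := (SGBaux.prod_iff L hLpos g).mp (h2 g hg)
      show 0 ≤ (Fintype.card G : ℝ)⁻¹ * ∑ χ : AddChar G ℂ, (χ g).re * Real.log (L χ)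
      exact mul_nonneg (inv_nonneg.mpr hcard0.le) hs
    · -- sum of ψ is zero
      have : ∑ g, ψ g = (Fintype.card G : ℝ)⁻¹ * ∑ χ : AddChar G ℂ,
          (∑ g, (χ g).re) * Real.log (L χ) := by
        simp only [hψdef]
        rw [← Finset.mul_sum, Finset.sum_comm]
        congr 1
        exact Finset.sum_congr rfl fun χ _ => by rw [Finset.sum_mul]
      rw [this]
      have hz : ∀ χ : AddChar G ℂ, (∑ g, (χ g).re) * Real.log (L χ) = 0 := by
        intro χ
        by_cases hχ : χ = 1
        · rw [hχ, hLone, Real.log_one, mul_zero]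
        · have : ∑ g, (χ g).re = 0 := by
            rw [← Complex.re_sum, AddChar.sum_eq_ite, if_neg (show ¬χ = 0 from hχ)]
            simp
          rw [this, zero_mul]
      rw [Finset.sum_congr rfl fun χ _ => hz χ]
      simp
    · -- P = exp Q
      have hmapQ : (Matrix.of fun g h : G => ψ (h - g)).map (algebraMap ℝ ℂ)
          = Matrix.of fun g h : G => (ψ (h - g) : ℂ) := by
        ext g h; simp [Matrix.map_apply]
      have hinj : ∀ (M N : Matrix G G ℝ),
          M.map (algebraMap ℝ ℂ) = N.map (algebraMap ℝ ℂ) → M = N := by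
        intro M N h
        ext g h'
        have := congrFun (congrFun h g) h'
        simpa [Matrix.map_apply] using this
      apply hinj
      rw [SGBaux.exp_map, hmapP, hmapQ]
      apply SGBaux.matrix_eq_of_char
      intro χ
      have hA : (Matrix.of fun g h : G => (f (h - g) : ℂ)) *ᵥ ⇑χ = ((L χ : ℝ) : ℂ) • ⇑χ := by
        rw [SGBaux.mulVec_char, SGBaux.char_sum_real f hf_symm]
      have hB : NormedSpace.exp (Matrix.of fun g h : G => (ψ (h - g) : ℂ)) *ᵥ ⇑χ
          = Complex.exp ((∑ k, (χ k).re * ψ k : ℝ) : ℂ) • ⇑χ := by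
        apply SGBaux.exp_eigen
        rw [SGBaux.mulVec_char, SGBaux.char_sum_real ψ (fun g => hsym g)]
      rw [hA, hB, hkey χ, ← Complex.ofReal_exp, Real.exp_log (hLpos χ)]
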